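/- Let M be a finitely generated commutative monoid, (A, 𝔪, k) a noetherian local ring, and α : M → (A, ·) a local monoid homomorphism (α(M ∖ M*) ⊆ 𝔪). Let J be a proper ideal of A, let 𝔞 be the ideal of ℤ[M] generated by all differences a − b with a, b ∈ α⁻¹(J), and let I be the ideal of A generated by α(M) ∩ J. Then 𝔞·A = I (where 𝔞·A denotes the extension of 𝔞 along ℤ[M] → A). -/

import Mathlib

/-- For a noetherian local prelog ring `(A, M, α)` with `M` finitely
generated and `α` local, a proper ideal `J ⊆ A`, the ideal `𝔞` of `ℤ[M]` generated by
the differences `a − b` with `a, b ∈ α⁻¹(J)`, and the ideal `I ⊆ A` generated by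
`α(M) ∩ J`, one has `𝔞·A = I`. -/
theorem stmt_12 {M : Type*} [CommMonoid M] [Monoid.FG M]
    {A : Type*} [CommRing A] [IsLocalRing A] [IsNoetherianRing A]
    (α : M →* A)
    (hloc : ∀ m : M, ¬ IsUnit m → α m ∈ IsLocalRing.maximalIdeal A)
    (J : Ideal A) (hJ : J ≠ ⊤) :
    Ideal.map ((MonoidAlgebra.lift ℤ A M α : MonoidAlgebra ℤ M →ₐ[ℤ] A).toRingHom)
        (Ideal.span {x : MonoidAlgebra ℤ M | ∃ a b : M, α a ∈ J ∧ α b ∈ J ∧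
          x = MonoidAlgebra.single a 1 - MonoidAlgebra.single b 1})
      = Ideal.span (Set.range α ∩ (J : Set A)) := by
  set φ := ((MonoidAlgebra.lift ℤ A M α : MonoidAlgebra ℤ M →ₐ[ℤ] A).toRingHom) with hφ
  have hφsingle : ∀ m : M, φ (MonoidAlgebra.single m 1) = α m := by
    intro m
    simp [hφ, MonoidAlgebra.lift_single]
  apply le_antisymm
  · rw [Ideal.map_le_iff_le_comap]
    rw [Ideal.span_le]
    rintro x ⟨a, b, ha, hb, rfl⟩
    simp only [SetLike.mem_coe, Ideal.mem_comap, map_sub, hφsingle]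
    exact sub_mem (Ideal.subset_span ⟨⟨a, rfl⟩, ha⟩) (Ideal.subset_span ⟨⟨b, rfl⟩, hb⟩)
  · rw [Ideal.span_le]
    rintro y ⟨⟨m, rfl⟩, hmJ⟩
    have hm2 : α (m * m) ∈ J := by
      rw [map_mul]; exact Ideal.mul_mem_left _ _ hmJ
    have hdiff : α m - α (m * m) ∈ Ideal.map φ
        (Ideal.span {x : MonoidAlgebra ℤ M | ∃ a b : M, α a ∈ J ∧ α b ∈ J ∧
          x = MonoidAlgebra.single a 1 - MonoidAlgebra.single b 1}) := by
      have : φ (MonoidAlgebra.single m 1 - MonoidAlgebra.single (m * m) 1)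
          = α m - α (m * m) := by rw [map_sub, hφsingle, hφsingle]
      rw [← this]
      exact Ideal.mem_map_of_mem φ (Ideal.subset_span ⟨m, m * m, hmJ, hm2, rfl⟩)
    have hmem : α m ∈ IsLocalRing.maximalIdeal A :=
      IsLocalRing.le_maximalIdeal hJ hmJ
    have hu : IsUnit (1 - α m) := by
      have := IsLocalRing.maximalIdeal.isMaximal A
      by_contra h
      have : 1 - α m ∈ IsLocalRing.maximalIdeal A := h
      have : (1 : A) ∈ IsLocalRing.maximalIdeal A := by
        have h2 := add_mem this hmem
        simpa using h2
      exact (IsLocalRing.maximalIdeal.isMaximal A).ne_top (Ideal.eq_top_of_isUnit_mem _ this isUnit_one)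
    obtain ⟨u, hu⟩ := hu
    have : α m = ↑u⁻¹ * (α m - α (m * m)) := by
      have h1 : (↑u : A) = 1 - α m := hu
      rw [eq_comm, Units.inv_mul_eq_iff_eq_mul, map_mul]
      rw [h1]
      ring
    rw [this]
    exact Ideal.mul_mem_left _ _ hdiff
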